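/- Let k ≥ 2 and let ℒ be a metric structure on the wedge of k circles (a k-tuple of positive edge lengths, not necessarily of volume one). Then the limits h'_ℒ = lim_{R→∞} (1/R)·log #{g ∈ CR_k : ℒ(g) ≤ R} and h''_ℒ = lim_{R→∞} (1/R)·log #{w ∈ 𝒞_k : ℓ_ℒ(w) ≤ R} exist, are finite, and h_ℒ = h'_ℒ = h''_ℒ, where h_ℒ is the volume entropy of ℒ. -/

import Mathlib

open Filter Topology
open scoped ENNReal

namespace McShane

/-- The ℒ-weighted length of the freely reduced form of `g`: the sum of `L i`
over all occurrences of `aᵢ^{±1}` in the reduced word of `g`. -/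
noncomputable def wlen {k : ℕ} (L : Fin k → ℝ) (g : FreeGroup (Fin k)) : ℝ :=
  ((FreeGroup.toWord g).map fun x => L x.1).sum

/-- The hyperbolic length of a conjugacy class: the infimum of the ℒ-weighted
lengths of its representatives. For positive edge lengths this equals
`∑ mᵢ·L i` where `mᵢ` counts occurrences of `aᵢ^{±1}` in the cyclically reduced form. -/
noncomputable def hlen {k : ℕ} (L : Fin k → ℝ) (c : ConjClasses (FreeGroup (Fin k))) : ℝ :=
  sInf (wlen L '' c.carrier)

/-- The open simplex `Δ_k` of volume-one metric structures on the wedge of `k` circles. -/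
def simplex (k : ℕ) : Set (Fin k → ℝ) :=
  {L | (∀ i, 0 < L i) ∧ ∑ i, L i = 1}

/-- The barycentric point `ℒ* = (1/k, …, 1/k)`. -/
noncomputable def Lstar (k : ℕ) : Fin k → ℝ := fun _ => 1 / k

/-- `g` is primitive iff it belongs to some free basis of the free group,
equivalently it is the image of a basis element under an automorphism. -/
def IsPrimitive {k : ℕ} (g : FreeGroup (Fin k)) : Prop :=
  ∃ (e : FreeGroup (Fin k) ≃* FreeGroup (Fin k)) (i : Fin k), e (FreeGroup.of i) = g

/-- `C_f(ℒ) = ∑_{w ∈ 𝒞_k} f(ℓ_ℒ(w))`, the sum over all nontrivial conjugacy classes. -/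
noncomputable def Cf {k : ℕ} (f : ℝ → ℝ) (L : Fin k → ℝ) : ℝ≥0∞ :=
  ∑' c : {c : ConjClasses (FreeGroup (Fin k)) // c ≠ 1}, ENNReal.ofReal (f (hlen L c.1))

/-- `P_f(ℒ) = ∑_{w ∈ 𝒫_k} f(ℓ_ℒ(w))`, the sum over conjugacy classes of primitive elements. -/
noncomputable def Pf {k : ℕ} (f : ℝ → ℝ) (L : Fin k → ℝ) : ℝ≥0∞ :=
  ∑' c : {c : ConjClasses (FreeGroup (Fin k)) // ∃ g, IsPrimitive g ∧ ConjClasses.mk g = c},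
    ENNReal.ofReal (f (hlen L c.1))

/-- `g` is cyclically reduced: the first and last letters of its reduced word
are not inverse to each other. -/
def IsCyclicallyReduced {k : ℕ} (g : FreeGroup (Fin k)) : Prop :=
  ∀ x ∈ g.toWord.head?, ∀ y ∈ g.toWord.getLast?, ¬(x.1 = y.1 ∧ x.2 = !y.2)

open FreeGroup List

set_option linter.unusedSectionVars false
variable {α : Type*} [DecidableEq α]

/-- inverse of a letter -/
abbrev linv (a : α × Bool) : α × Bool := (a.1, !a.2)

lemma linv_linv (a : α × Bool) : linv (linv a) = a := by simp [linv]

lemma linv_inj : Function.Injective (linv (α := α)) := by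
  intro a b h
  have := congrArg linv h
  simpa [linv_linv] using this

lemma ne_linv_comm {a b : α × Bool} : a ≠ linv b ↔ b ≠ linv a := by
  constructor <;> intro h hc <;> subst hc <;> simp [linv_linv] at h

lemma ne_linv_self (a : α × Bool) : a ≠ linv a := by
  intro h
  have := congrArg Prod.snd h
  simp [linv] at this

/-- a word is (freely) reduced -/
def Reduced (w : List (α × Bool)) : Prop := List.IsChain (fun a b => a ≠ linv b) w

lemma Reduced.nil : Reduced ([] : List (α × Bool)) := List.isChain_nil

lemma Reduced.infix {w w' : List (α × Bool)} (h : Reduced w) (h' : w' <:+: w) : Reduced w' :=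
  List.IsChain.infix h h'

lemma reduced_reduce (w : List (α × Bool)) : Reduced (reduce w) := by
  induction w with
  | nil => exact Reduced.nil
  | cons x w ih =>
    rcases x with ⟨a, b⟩
    rw [FreeGroup.reduce.cons]
    rcases hr : reduce w with _ | ⟨hd, tl⟩
    · simp [Reduced]
    · rw [hr] at ih
      by_cases hc : a = hd.1 ∧ b = !hd.2
      · simp only [hc, and_self, if_true]
        exact ih.tail
      · simp only [hc, if_false]
        exact List.IsChain.cons_cons (by simp [linv, Prod.ext_iff, hc]) ih

lemma Reduced.reduce_eq {w : List (α × Bool)} (h : Reduced w) : reduce w = w := by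
  induction w with
  | nil => rfl
  | cons x w ih =>
    rcases x with ⟨a, b⟩
    have hw : Reduced w := h.tail
    rw [FreeGroup.reduce.cons, ih hw]
    rcases hww : w with _ | ⟨hd, tl⟩
    · rfl
    · subst hww
      have h2 : (a, b) ≠ linv hd := (List.isChain_cons_cons.mp h).1
      simp only [Ne, Prod.ext_iff, linv, not_and] at h2
      have h3 : ¬(a = hd.1 ∧ b = !hd.2) := fun hc => h2 hc.1 hc.2
      simp [h3]

lemma toWord_mk_reduced {w : List (α × Bool)} (h : Reduced w) : (FreeGroup.mk w).toWord = w := by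
  rw [FreeGroup.toWord_mk, h.reduce_eq]

lemma reduced_toWord (g : FreeGroup α) : Reduced g.toWord := by
  rw [← FreeGroup.reduce_toWord]
  exact reduced_reduce _

/-- a word is cyclically reduced -/
def CycRed (w : List (α × Bool)) : Prop :=
  Reduced w ∧ ∀ a ∈ w.head?, ∀ b ∈ w.getLast?, a ≠ linv b

lemma invRev_cons (x : α × Bool) (w : List (α × Bool)) :
    FreeGroup.invRev (x :: w) = FreeGroup.invRev w ++ [linv x] := by
  simp [FreeGroup.invRev, linv]

lemma invRev_singleton (x : α × Bool) :
    FreeGroup.invRev [x] = [linv x] := by simp [FreeGroup.invRev, linv]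

lemma mk_singleton_inv (x : α × Bool) :
    (FreeGroup.mk [x])⁻¹ = FreeGroup.mk [linv x] := by
  rw [FreeGroup.inv_mk, invRev_singleton]

lemma mk_nil_eq_one : FreeGroup.mk ([] : List (α × Bool)) = 1 := rfl

lemma mk_cons (x : α × Bool) (w : List (α × Bool)) :
    FreeGroup.mk (x :: w) = FreeGroup.mk [x] * FreeGroup.mk w := by
  rw [FreeGroup.mul_mk]; rfl

lemma cycRed_iff_double {w : List (α × Bool)} :
    CycRed w ↔ Reduced w ∧ Reduced (w ++ w) := by
  unfold CycRed Reduced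
  rw [List.isChain_append]
  constructor
  · rintro ⟨h1, h2⟩
    exact ⟨h1, h1, h1, fun a ha b hb => ne_linv_comm.mp (h2 b hb a ha)⟩
  · rintro ⟨h1, -, -, h2⟩
    exact ⟨h1, fun a ha b hb => ne_linv_comm.mp (h2 b hb a ha)⟩

lemma Reduced.rotate {w : List (α × Bool)} (h : Reduced (w ++ w)) (n : ℕ) :
    Reduced (w.rotate n ++ w.rotate n) := by
  rcases Nat.eq_zero_or_pos w.length with hw | hw
  · rw [List.length_eq_zero_iff] at hw
    subst hw
    simpa using h
  have hw1 : Reduced w := h.infix ⟨[], w, by simp⟩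
  have hwne : w ≠ [] := by
    intro hc
    rw [hc] at hw
    simp at hw
  have hj : ∀ a ∈ w.getLast?, ∀ b ∈ w.head?, a ≠ linv b := (List.isChain_append.mp h).2.2
  have h3 : Reduced (w ++ w ++ w) := by
    unfold Reduced
    rw [List.isChain_append]
    refine ⟨h, hw1, ?_⟩
    intro a ha b hb
    rw [List.getLast?_append_of_ne_nil _ hwne] at ha
    exact hj a ha b hb
  obtain ⟨a, b, hab, hrot⟩ : ∃ a b, a ++ b = w ∧ w.rotate n = b ++ a := by
    have hmle : n % w.length ≤ w.length := le_of_lt (Nat.mod_lt _ hw)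
    exact ⟨w.take (n % w.length), w.drop (n % w.length), List.take_append_drop _ w,
      by rw [← List.rotate_mod, List.rotate_eq_drop_append_take hmle]⟩
  refine h3.infix ⟨a, b, ?_⟩
  rw [hrot, ← hab]
  simp [List.append_assoc]

lemma CycRed.rotate {w : List (α × Bool)} (h : CycRed w) (n : ℕ) : CycRed (w.rotate n) := by
  rw [cycRed_iff_double] at h ⊢
  have h2 := Reduced.rotate h.2 n
  refine ⟨?_, h2⟩
  exact h2.infix ⟨[], w.rotate n, by simp⟩

lemma reduced_sandwich {x y : α × Bool} {W : List (α × Bool)} (hW : Reduced W)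
    (h1 : ∀ a ∈ W.head?, x ≠ linv a) (h2 : ∀ a ∈ W.getLast?, a ≠ linv y)
    (h3 : W = [] → x ≠ linv y) : Reduced ([x] ++ W ++ [y]) := by
  unfold Reduced
  rw [List.append_assoc, List.isChain_append]
  refine ⟨List.isChain_singleton x, ?_, ?_⟩
  · rw [List.isChain_append]
    exact ⟨hW, List.isChain_singleton y, fun a ha b hb => by
      simp only [List.head?_cons, Option.mem_some_iff] at hb; subst hb; exact h2 a ha⟩
  · intro a ha b hb
    simp only [List.getLast?_singleton, Option.mem_some_iff] at ha
    subst ha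
    rcases hWe : W with _ | ⟨c, t⟩
    · simp only [hWe, List.nil_append, List.head?_cons, Option.mem_some_iff] at hb
      subst hb; exact h3 hWe
    · simp only [hWe, List.cons_append, List.head?_cons, Option.mem_some_iff] at hb
      subst hb
      exact h1 c (by rw [hWe]; rfl)

lemma mk_step {L₁ L₂ : List (α × Bool)} (h : FreeGroup.Red.Step L₁ L₂) :
    FreeGroup.mk L₁ = FreeGroup.mk L₂ :=
  FreeGroup.reduce.exact (FreeGroup.reduce.Step.eq h)

lemma mk_cancel_cons (x : α × Bool) (L : List (α × Bool)) :
    FreeGroup.mk (x :: linv x :: L) = FreeGroup.mk L :=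
  mk_step (@FreeGroup.Red.Step.cons_not _ L x.1 x.2)

lemma mk_cancel_mid (L₁ L₂ : List (α × Bool)) (x : α × Bool) :
    FreeGroup.mk (L₁ ++ x :: linv x :: L₂) = FreeGroup.mk (L₁ ++ L₂) :=
  mk_step (@FreeGroup.Red.Step.not _ L₁ L₂ x.1 x.2)

lemma conj_word (x : α × Bool) (W : List (α × Bool)) :
    FreeGroup.mk [x] * FreeGroup.mk W * (FreeGroup.mk [x])⁻¹ =
      FreeGroup.mk (x :: (W ++ [linv x])) := by
  rw [mk_singleton_inv, FreeGroup.mul_mk, FreeGroup.mul_mk]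
  exact congrArg FreeGroup.mk (by simp)

lemma step_structure (x : α × Bool) (v w : List (α × Bool))
    (hred : Reduced (v ++ w ++ FreeGroup.invRev v)) (hc : CycRed w) :
    ∃ v₂ n, Reduced (v₂ ++ w.rotate n ++ FreeGroup.invRev v₂) ∧ CycRed (w.rotate n) ∧
      FreeGroup.mk [x] * FreeGroup.mk (v ++ w ++ FreeGroup.invRev v) * (FreeGroup.mk [x])⁻¹ =
        FreeGroup.mk (v₂ ++ w.rotate n ++ FreeGroup.invRev v₂) := by
  rcases v with _ | ⟨h, v₀⟩
  · -- v = []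
    rcases hwe : w with _ | ⟨hd, t⟩
    · -- w = []
      subst hwe
      refine ⟨[], 0, by simpa [FreeGroup.invRev] using (Reduced.nil (α := α)),
        by simpa using hc, ?_⟩
      have : FreeGroup.mk ([] ++ ([] : List (α × Bool)).rotate 0 ++ FreeGroup.invRev []) =
          FreeGroup.mk ([] : List (α × Bool)) := by simp [FreeGroup.invRev]
      rw [this, show ([] : List (α × Bool)) ++ [] ++ FreeGroup.invRev [] = [] by
        simp [FreeGroup.invRev], conj_word]
      exact mk_cancel_cons x []
    · subst hwe
      by_cases hh : hd = linv x
      · -- first letter of w cancels with x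
        subst hh
        have hrot : (linv x :: t).rotate 1 = t ++ [linv x] := by
          rw [List.rotate_cons_succ, List.rotate_zero]
        refine ⟨[], 1, ?_, hc.rotate 1, ?_⟩
        · simpa [FreeGroup.invRev] using (hc.rotate 1).1
        · rw [show ([] : List (α × Bool)) ++ (linv x :: t) ++ FreeGroup.invRev [] =
            linv x :: t by simp [FreeGroup.invRev], conj_word,
            show ([] : List (α × Bool)) ++ (linv x :: t).rotate 1 ++ FreeGroup.invRev [] =
            t ++ [linv x] by simp [FreeGroup.invRev, hrot],
            show x :: ((linv x :: t) ++ [linv x]) = x :: linv x :: (t ++ [linv x]) by simp]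
          exact mk_cancel_cons x _
      · by_cases hl : (hd :: t).getLast? = some x
        · -- last letter of w cancels with x⁻¹
          obtain ⟨t', ht'⟩ := List.getLast?_eq_some_iff.mp hl
          have hrot : (hd :: t).rotate t'.length = x :: t' := by
            rw [ht', List.rotate_eq_drop_append_take (by simp), List.drop_left,
              List.take_left]
            rfl
          refine ⟨[], t'.length, ?_, hc.rotate t'.length, ?_⟩
          · simpa [FreeGroup.invRev] using (hc.rotate t'.length).1
          · rw [show ([] : List (α × Bool)) ++ (hd :: t) ++ FreeGroup.invRev [] =
              hd :: t by simp [FreeGroup.invRev], conj_word,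
              show ([] : List (α × Bool)) ++ (hd :: t).rotate t'.length ++ FreeGroup.invRev [] =
              x :: t' by simp [FreeGroup.invRev, hrot], ht',
              show x :: ((t' ++ [x]) ++ [linv x]) = (x :: t') ++ (x :: linv x :: []) by simp,
              mk_cancel_mid]
            simp
        · -- no cancellation
          refine ⟨[x], 0, ?_, by simpa using hc, ?_⟩
          · rw [List.rotate_zero, invRev_singleton]
            refine reduced_sandwich hc.1 ?_ ?_ (by simp)
            · intro a ha
              simp only [List.head?_cons, Option.mem_some_iff] at ha
              subst ha
              exact ne_linv_comm.mp hh
            · intro a ha hax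
              rw [linv_linv] at hax
              subst hax
              exact hl ha
          · rw [List.rotate_zero, invRev_singleton,
              show ([] : List (α × Bool)) ++ (hd :: t) ++ FreeGroup.invRev [] =
                hd :: t by simp [FreeGroup.invRev], conj_word]
            exact congrArg FreeGroup.mk (by simp)
  · -- v = h :: v₀
    by_cases hh : h = linv x
    · -- x cancels with head of v
      subst hh
      refine ⟨v₀, 0, ?_, by simpa using hc, ?_⟩
      · rw [List.rotate_zero]
        refine hred.infix ⟨[linv x], [linv (linv x)], ?_⟩
        simp [invRev_cons, List.append_assoc]
      · rw [List.rotate_zero, conj_word, invRev_cons, linv_linv,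
          show x :: ((linv x :: v₀) ++ w ++ (FreeGroup.invRev v₀ ++ [x]) ++ [linv x]) =
            x :: linv x :: (v₀ ++ w ++ (FreeGroup.invRev v₀ ++ (x :: linv x :: []))) by simp,
          mk_cancel_cons,
          show v₀ ++ w ++ (FreeGroup.invRev v₀ ++ (x :: linv x :: [])) =
            (v₀ ++ w ++ FreeGroup.invRev v₀) ++ (x :: linv x :: []) by simp [List.append_assoc],
          show (FreeGroup.mk (v₀ ++ w ++ FreeGroup.invRev v₀ ++ x :: linv x :: []) =
            FreeGroup.mk ((v₀ ++ w ++ FreeGroup.invRev v₀) ++ [])) from mk_cancel_mid _ _ x]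
        simp
    · -- no cancellation with v
      refine ⟨x :: (h :: v₀), 0, ?_, by simpa using hc, ?_⟩
      · rw [List.rotate_zero, invRev_cons x (h :: v₀)]
        have hW : Reduced ([x] ++ ((h :: v₀) ++ w ++ FreeGroup.invRev (h :: v₀)) ++ [linv x]) := by
          refine reduced_sandwich hred ?_ ?_ (by simp)
          · intro a ha
            simp only [List.cons_append, List.head?_cons, Option.mem_some_iff] at ha
            subst ha
            exact ne_linv_comm.mp hh
          · intro a ha hax
            rw [linv_linv] at hax
            subst hax
            rw [invRev_cons, show (h :: v₀) ++ w ++ (FreeGroup.invRev v₀ ++ [linv h]) =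
              ((h :: v₀) ++ w ++ FreeGroup.invRev v₀) ++ [linv h] by simp [List.append_assoc],
              List.getLast?_concat, Option.mem_some_iff] at ha
            exact hh (by rw [← ha, linv_linv])
        refine hW.infix ⟨[], [], ?_⟩
        simp [List.append_assoc]
      · rw [List.rotate_zero, conj_word, invRev_cons x (h :: v₀)]
        exact congrArg FreeGroup.mk (by simp [List.append_assoc])

lemma conj_structure (u w : List (α × Bool)) (hc : CycRed w) :
    ∃ v n, Reduced (v ++ w.rotate n ++ FreeGroup.invRev v) ∧ CycRed (w.rotate n) ∧
      FreeGroup.mk u * FreeGroup.mk w * (FreeGroup.mk u)⁻¹ =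
        FreeGroup.mk (v ++ w.rotate n ++ FreeGroup.invRev v) := by
  induction u with
  | nil =>
    refine ⟨[], 0, ?_, by simpa using hc, ?_⟩
    · rw [List.rotate_zero]
      simpa [FreeGroup.invRev] using hc.1
    · rw [mk_nil_eq_one]
      simp [List.rotate_zero, FreeGroup.invRev]
  | cons y u₀ ih =>
    obtain ⟨v, n, h1, h2, h3⟩ := ih
    obtain ⟨v₂, m, g1, g2, g3⟩ := step_structure y v (w.rotate n) h1 h2
    rw [List.rotate_rotate] at g1 g2 g3
    refine ⟨v₂, n + m, g1, g2, ?_⟩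
    rw [mk_cons, mul_inv_rev, show FreeGroup.mk [y] * FreeGroup.mk u₀ * FreeGroup.mk w *
      ((FreeGroup.mk u₀)⁻¹ * (FreeGroup.mk [y])⁻¹) =
      FreeGroup.mk [y] * (FreeGroup.mk u₀ * FreeGroup.mk w * (FreeGroup.mk u₀)⁻¹) *
        (FreeGroup.mk [y])⁻¹ by group, h3, g3]

lemma cycred_conj_rotate {g g' : FreeGroup α} (hg : CycRed g.toWord) (hg' : CycRed g'.toWord)
    (hcj : IsConj g g') : ∃ n, g'.toWord = g.toWord.rotate n := by
  obtain ⟨c, hc⟩ := isConj_iff.mp hcj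
  obtain ⟨v, n, h1, h2, h3⟩ := conj_structure c.toWord g.toWord hg
  rw [FreeGroup.mk_toWord, FreeGroup.mk_toWord, hc] at h3
  have hW : g'.toWord = v ++ g.toWord.rotate n ++ FreeGroup.invRev v := by
    rw [h3, toWord_mk_reduced h1]
  rcases v with _ | ⟨a, v₀⟩
  · exact ⟨n, by simpa using hW⟩
  · exfalso
    have hhead : g'.toWord.head? = some a := by
      rw [hW]; simp
    have hlast : g'.toWord.getLast? = some (linv a) := by
      rw [hW, invRev_cons, show (a :: v₀) ++ g.toWord.rotate n ++ (FreeGroup.invRev v₀ ++ [linv a])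
        = ((a :: v₀) ++ g.toWord.rotate n ++ FreeGroup.invRev v₀) ++ [linv a] by
          simp [List.append_assoc]]
      exact List.getLast?_concat
    exact hg'.2 a (by rw [hhead]; rfl) (linv a) (by rw [hlast]; rfl) (by rw [linv_linv])

open Filter Topology

section Counting

variable {k : ℕ} (L : Fin k → ℝ)

lemma isCyc_iff_cycRed {g : FreeGroup (Fin k)} :
    IsCyclicallyReduced g ↔ CycRed g.toWord := by
  constructor
  · intro hg
    refine ⟨reduced_toWord g, fun a ha b hb hab => ?_⟩
    exact hg a ha b hb (by rw [hab]; exact ⟨rfl, rfl⟩)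
  · intro hg a ha b hb hab
    exact hg.2 a ha b hb (Prod.ext hab.1 hab.2)

lemma isCyc_one : IsCyclicallyReduced (1 : FreeGroup (Fin k)) := by
  intro x hx
  rw [FreeGroup.toWord_one] at hx
  simp at hx

lemma sum_map_ge {ε : ℝ} (hε : ∀ i, ε ≤ L i) (w : List (Fin k × Bool)) :
    ε * w.length ≤ (w.map fun x => L x.1).sum := by
  induction w with
  | nil => simp
  | cons x t ih =>
    simp only [List.map_cons, List.sum_cons, List.length_cons]
    push_cast
    calc ε * (t.length + 1) = ε * t.length + ε := by ring
    _ ≤ (t.map fun x => L x.1).sum + L x.1 := add_le_add ih (hε x.1)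
    _ = L x.1 + (t.map fun x => L x.1).sum := by ring

lemma wlen_nonneg (hL : ∀ i, 0 < L i) (g : FreeGroup (Fin k)) : 0 ≤ wlen L g := by
  apply List.sum_nonneg
  intro a ha
  obtain ⟨x, -, rfl⟩ := List.mem_map.mp ha
  exact (hL x.1).le

lemma wlen_mk_reduced {w : List (Fin k × Bool)} (hw : Reduced w) :
    wlen L (FreeGroup.mk w) = (w.map fun x => L x.1).sum := by
  rw [wlen, toWord_mk_reduced hw]

lemma exists_eps (hL : ∀ i, 0 < L i) : ∃ ε : ℝ, 0 < ε ∧ ∀ i, ε ≤ L i := by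
  rcases Nat.eq_zero_or_pos k with hk | hk
  · exact ⟨1, one_pos, fun i => absurd i.2 (by omega)⟩
  · obtain ⟨i0, -, hi0⟩ := Finset.exists_min_image Finset.univ L
      ⟨⟨0, hk⟩, Finset.mem_univ _⟩
    exact ⟨L i0, hL i0, fun i => hi0 i (Finset.mem_univ _)⟩

lemma length_toWord_le {ε R : ℝ} (hε : 0 < ε) (hεL : ∀ i, ε ≤ L i) {g : FreeGroup (Fin k)}
    (hg : wlen L g ≤ R) : (g.toWord.length : ℝ) ≤ R / ε := by
  rw [le_div_iff₀ hε, mul_comm]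
  calc ε * g.toWord.length ≤ (g.toWord.map fun x => L x.1).sum := sum_map_ge L hεL _
  _ ≤ R := hg

lemma finite_wlen_le (hL : ∀ i, 0 < L i) (R : ℝ) : Finite {g : FreeGroup (Fin k) // wlen L g ≤ R} := by
  obtain ⟨ε, hε, hεL⟩ := exists_eps L hL
  have hsub : {g : FreeGroup (Fin k) | wlen L g ≤ R} ⊆
      FreeGroup.toWord ⁻¹' {l | l.length ≤ ⌊R / ε⌋₊} := by
    intro g hg
    exact Nat.le_floor (length_toWord_le L hε hεL hg)
  have hfin : {g : FreeGroup (Fin k) | wlen L g ≤ R}.Finite :=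
    Set.Finite.subset (Set.Finite.preimage (Set.injOn_of_injective FreeGroup.toWord_injective)
      (List.finite_length_le _ _)) hsub
  exact hfin.to_subtype

/-- `hlen (mk g) ≤ wlen g` -/
lemma bddBelow_wlen (hL : ∀ i, 0 < L i) (s : Set (FreeGroup (Fin k))) :
    BddBelow (wlen L '' s) := by
  refine ⟨0, ?_⟩
  rintro x ⟨y, -, rfl⟩
  exact wlen_nonneg L hL y

lemma hlen_le_wlen (hL : ∀ i, 0 < L i) (g : FreeGroup (Fin k)) :
    hlen L (ConjClasses.mk g) ≤ wlen L g :=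
  csInf_le (bddBelow_wlen L hL _) ⟨g, ConjClasses.mem_carrier_iff_mk_eq.mpr rfl, rfl⟩

lemma mk_ne_one {g : FreeGroup (Fin k)} (hg : g ≠ 1) : ConjClasses.mk g ≠ 1 := by
  intro hc
  rw [ConjClasses.one_eq_mk_one, ConjClasses.mk_eq_mk_iff_isConj, isConj_one_left] at hc
  exact hg hc

/-- choosing an almost-minimal representative of a conjugacy class -/
lemma exists_rep_wlen_lt {c : ConjClasses (FreeGroup (Fin k))} {R : ℝ} (hc : hlen L c ≤ R) :
    ∃ g, ConjClasses.mk g = c ∧ wlen L g < R + 1 := by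
  obtain ⟨g0, hg0⟩ := ConjClasses.exists_rep c
  have hne : (wlen L '' c.carrier).Nonempty :=
    ⟨wlen L g0, g0, ConjClasses.mem_carrier_iff_mk_eq.mpr hg0, rfl⟩
  have hlt : sInf (wlen L '' c.carrier) < R + 1 := lt_of_le_of_lt hc (by linarith)
  obtain ⟨x, ⟨g, hgc, rfl⟩, hxlt⟩ := exists_lt_of_csInf_lt hne hlt
  exact ⟨g, ConjClasses.mem_carrier_iff_mk_eq.mp hgc, hxlt⟩

end Counting

section Inject

variable {k : ℕ} (L : Fin k → ℝ)

lemma avoid3 {β : Type*} {x y z : β} (hxy : x ≠ y) (hxz : x ≠ z) (hyz : y ≠ z)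
    (o1 o2 : Option β) :
    ∃ c, (c = x ∨ c = y ∨ c = z) ∧ (∀ a ∈ o1, c ≠ a) ∧ (∀ a ∈ o2, c ≠ a) := by
  have main : ∃ c, (c = x ∨ c = y ∨ c = z) ∧ o1 ≠ some c ∧ o2 ≠ some c := by
    by_cases hx : o1 ≠ some x ∧ o2 ≠ some x
    · exact ⟨x, Or.inl rfl, hx⟩
    by_cases hy : o1 ≠ some y ∧ o2 ≠ some y
    · exact ⟨y, Or.inr (Or.inl rfl), hy⟩
    rw [not_and_or, not_ne_iff, not_ne_iff] at hx hy
    refine ⟨z, Or.inr (Or.inr rfl), ?_, ?_⟩ <;>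
      (rcases hx with hx | hx <;> rcases hy with hy | hy <;> intro hc <;> simp_all)
  obtain ⟨c, hc, h1, h2⟩ := main
  refine ⟨c, hc, ?_, ?_⟩ <;>
  · intro a ha hca
    subst hca
    rw [Option.mem_def] at ha
    simp_all

lemma exists_good_letter (hk : 2 ≤ k) (w : List (Fin k × Bool)) :
    ∃ ℓ : Fin k × Bool, (ℓ.1 = (⟨0, by omega⟩ : Fin k) ∨ ℓ.1 = (⟨1, by omega⟩ : Fin k)) ∧
      (∀ a ∈ w.head?, ℓ ≠ linv a) ∧ (∀ a ∈ w.getLast?, ℓ ≠ linv a) := by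
  have h01 : (⟨0, by omega⟩ : Fin k) ≠ (⟨1, by omega⟩ : Fin k) := by
    intro hc
    have := congrArg Fin.val hc
    simp at this
  obtain ⟨c, hc, hc1, hc2⟩ := avoid3 (x := ((⟨0, by omega⟩ : Fin k), true))
    (y := ((⟨0, by omega⟩ : Fin k), false)) (z := ((⟨1, by omega⟩ : Fin k), true))
    (by simp) (by simp [h01]) (by simp [h01]) (w.head?.map linv) (w.getLast?.map linv)
  refine ⟨c, ?_, ?_, ?_⟩
  · rcases hc with rfl | rfl | rfl <;> simp
  · intro a ha
    rw [Option.mem_def] at ha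
    exact hc1 (linv a) (by simp [Option.mem_def, ha])
  · intro a ha
    rw [Option.mem_def] at ha
    exact hc2 (linv a) (by simp [Option.mem_def, ha])

lemma card_all_le_cyc (hk : 2 ≤ k) (hL : ∀ i, 0 < L i) :
    ∃ CL > 0, ∀ R : ℝ, Nat.card {g : FreeGroup (Fin k) // wlen L g ≤ R} ≤
      Nat.card {g : FreeGroup (Fin k) // IsCyclicallyReduced g ∧ wlen L g ≤ R + CL} := by
  set i0 : Fin k := ⟨0, by omega⟩
  set i1 : Fin k := ⟨1, by omega⟩
  refine ⟨2 * (L i0 + L i1), by have := hL i0; have := hL i1; positivity, fun R => ?_⟩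
  set CL := 2 * (L i0 + L i1) with hCL
  haveI : Finite {g : FreeGroup (Fin k) // wlen L g ≤ R + CL} := finite_wlen_le L hL _
  haveI : Finite {g : FreeGroup (Fin k) // IsCyclicallyReduced g ∧ wlen L g ≤ R + CL} :=
    Finite.of_injective (fun gp => (⟨gp.1, gp.2.2⟩ : {g : FreeGroup (Fin k) // wlen L g ≤ R + CL}))
      (fun a b hab => Subtype.ext (by simpa using congrArg Subtype.val hab))
  have key : ∀ gp : {g : FreeGroup (Fin k) // wlen L g ≤ R},
      ∃ img : {g : FreeGroup (Fin k) // IsCyclicallyReduced g ∧ wlen L g ≤ R + CL},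
        ∃ ℓ : Fin k × Bool, img.1.toWord = ℓ :: (gp.1.toWord ++ [ℓ]) := by
    rintro ⟨g, hg⟩
    obtain ⟨ℓ, hi, hhead, hlast⟩ := exists_good_letter hk g.toWord
    have hred : Reduced ([ℓ] ++ g.toWord ++ [ℓ]) := by
      refine reduced_sandwich (reduced_toWord g) hhead ?_ (fun _ => ne_linv_self ℓ)
      intro a ha
      exact ne_linv_comm.mp (hlast a ha)
    have htw : (FreeGroup.mk ([ℓ] ++ g.toWord ++ [ℓ])).toWord = ℓ :: (g.toWord ++ [ℓ]) := by
      rw [toWord_mk_reduced hred]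
      simp
    have hcyc : IsCyclicallyReduced (FreeGroup.mk ([ℓ] ++ g.toWord ++ [ℓ])) := by
      rw [isCyc_iff_cycRed]
      constructor
      · rw [htw]; simpa using hred
      · intro a ha b hb
        rw [htw] at ha hb
        simp only [List.head?_cons, Option.mem_some_iff] at ha
        rw [show (ℓ :: (g.toWord ++ [ℓ])) = (ℓ :: g.toWord) ++ [ℓ] by simp,
          List.getLast?_concat, Option.mem_some_iff] at hb
        subst ha; subst hb
        exact ne_linv_self ℓ
    have hlen2 : wlen L (FreeGroup.mk ([ℓ] ++ g.toWord ++ [ℓ])) = wlen L g + 2 * L ℓ.1 := by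
      rw [wlen, htw, wlen]
      simp
      ring
    have hbound : wlen L (FreeGroup.mk ([ℓ] ++ g.toWord ++ [ℓ])) ≤ R + CL := by
      rw [hlen2, hCL]
      have : L ℓ.1 ≤ L i0 + L i1 := by
        rcases hi with hi | hi <;> rw [hi]
        · have := hL i1; linarith
        · have := hL i0; linarith
      linarith
    exact ⟨⟨_, hcyc, hbound⟩, ℓ, htw⟩
  choose F hF using key
  refine Nat.card_le_card_of_injective F ?_
  intro g1 g2 h12
  obtain ⟨ℓ1, e1⟩ := hF g1
  obtain ⟨ℓ2, e2⟩ := hF g2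
  rw [h12] at e1
  rw [e2] at e1
  obtain ⟨hℓ, hw⟩ := List.cons.injEq .. ▸ e1
  subst hℓ
  exact Subtype.ext (FreeGroup.toWord_injective (List.append_cancel_right hw.symm))

lemma exists_conj_inj (hL : ∀ i, 0 < L i) (R : ℝ) :
    ∃ F : {c : ConjClasses (FreeGroup (Fin k)) // c ≠ 1 ∧ hlen L c ≤ R} →
      {g : FreeGroup (Fin k) // wlen L g ≤ R + 1}, Function.Injective F := by
  have key : ∀ cp : {c : ConjClasses (FreeGroup (Fin k)) // c ≠ 1 ∧ hlen L c ≤ R},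
      ∃ gp : {g : FreeGroup (Fin k) // wlen L g ≤ R + 1}, ConjClasses.mk gp.1 = cp.1 := by
    rintro ⟨c, h1, h2⟩
    obtain ⟨g, hgc, hgw⟩ := exists_rep_wlen_lt L h2
    exact ⟨⟨g, hgw.le⟩, hgc⟩
  choose F hF using key
  refine ⟨F, fun c1 c2 h12 => ?_⟩
  have := hF c1
  rw [h12, hF c2] at this
  exact Subtype.ext this.symm

lemma finite_conj (hL : ∀ i, 0 < L i) (R : ℝ) :
    Finite {c : ConjClasses (FreeGroup (Fin k)) // c ≠ 1 ∧ hlen L c ≤ R} := by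
  obtain ⟨F, hF⟩ := exists_conj_inj L hL R
  haveI : Finite {g : FreeGroup (Fin k) // wlen L g ≤ R + 1} := finite_wlen_le L hL _
  exact Finite.of_injective F hF

lemma card_conj_le_all (hL : ∀ i, 0 < L i) (R : ℝ) :
    Nat.card {c : ConjClasses (FreeGroup (Fin k)) // c ≠ 1 ∧ hlen L c ≤ R} ≤
      Nat.card {g : FreeGroup (Fin k) // wlen L g ≤ R + 1} := by
  obtain ⟨F, hF⟩ := exists_conj_inj L hL R
  haveI : Finite {g : FreeGroup (Fin k) // wlen L g ≤ R + 1} := finite_wlen_le L hL _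
  exact Nat.card_le_card_of_injective F hF

end Inject

section Fiber

variable {k : ℕ} (L : Fin k → ℝ)

lemma card_cyc_le_conj (hL : ∀ i, 0 < L i) {ε : ℝ} (hε : 0 < ε) (hεL : ∀ i, ε ≤ L i) (R : ℝ) :
    Nat.card {g : FreeGroup (Fin k) // IsCyclicallyReduced g ∧ wlen L g ≤ R} ≤
      Nat.card {c : ConjClasses (FreeGroup (Fin k)) // c ≠ 1 ∧ hlen L c ≤ R} *
        (⌊R / ε⌋₊ + 1) + 1 := by
  classical
  haveI : Finite {c : ConjClasses (FreeGroup (Fin k)) // c ≠ 1 ∧ hlen L c ≤ R} :=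
    finite_conj L hL R
  set T := ({c : ConjClasses (FreeGroup (Fin k)) // c ≠ 1 ∧ hlen L c ≤ R} ×
    Fin (⌊R / ε⌋₊ + 1)) ⊕ Unit with hT
  set base : ConjClasses (FreeGroup (Fin k)) → FreeGroup (Fin k) := fun c =>
    if h : ∃ g, IsCyclicallyReduced g ∧ ConjClasses.mk g = c then h.choose else 1 with hbase
  have hbase_spec : ∀ c, (∃ g, IsCyclicallyReduced g ∧ ConjClasses.mk g = c) →
      IsCyclicallyReduced (base c) ∧ ConjClasses.mk (base c) = c := by
    intro c h
    rw [hbase]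
    simp only [dif_pos h]
    exact h.choose_spec
  have key : ∀ gp : {g : FreeGroup (Fin k) // IsCyclicallyReduced g ∧ wlen L g ≤ R},
      ∃ img : T, (gp.1 = 1 ∧ img = Sum.inr ()) ∨
        (∃ pm : {c : ConjClasses (FreeGroup (Fin k)) // c ≠ 1 ∧ hlen L c ≤ R} ×
            Fin (⌊R / ε⌋₊ + 1), img = Sum.inl pm ∧
          gp.1.toWord = (base pm.1.1).toWord.rotate pm.2.1) := by
    rintro ⟨g, hgc, hgw⟩
    by_cases hg1 : g = 1
    · exact ⟨Sum.inr (), Or.inl ⟨hg1, rfl⟩⟩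
    · have hex : ∃ g', IsCyclicallyReduced g' ∧ ConjClasses.mk g' = ConjClasses.mk g :=
        ⟨g, hgc, rfl⟩
      obtain ⟨hbc, hbmk⟩ := hbase_spec _ hex
      have hconj : IsConj (base (ConjClasses.mk g)) g :=
        ConjClasses.mk_eq_mk_iff_isConj.mp hbmk
      obtain ⟨n, hn⟩ := cycred_conj_rotate (isCyc_iff_cycRed.mp hbc)
        (isCyc_iff_cycRed.mp hgc) hconj
      have hlenpos : 0 < (base (ConjClasses.mk g)).toWord.length := by
        rcases Nat.eq_zero_or_pos (base (ConjClasses.mk g)).toWord.length with h0 | h0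
        · exfalso
          rw [List.length_eq_zero_iff] at h0
          rw [h0, List.rotate_nil] at hn
          exact hg1 (FreeGroup.toWord_eq_nil_iff.mp hn)
        · exact h0
      have hlen_eq : (base (ConjClasses.mk g)).toWord.length = g.toWord.length := by
        rw [hn, List.length_rotate]
      have hle : g.toWord.length ≤ ⌊R / ε⌋₊ :=
        Nat.le_floor (length_toWord_le L hε hεL hgw)
      set m := n % (base (ConjClasses.mk g)).toWord.length with hm
      have hmlt : m < ⌊R / ε⌋₊ + 1 := by
        have := Nat.mod_lt n hlenpos
        omega
      have hrot : g.toWord = (base (ConjClasses.mk g)).toWord.rotate m := by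
        rw [hm, List.rotate_mod, hn]
      refine ⟨Sum.inl ⟨⟨ConjClasses.mk g, mk_ne_one hg1, le_trans (hlen_le_wlen L hL g) hgw⟩,
        ⟨m, hmlt⟩⟩, Or.inr ⟨_, rfl, hrot⟩⟩
  choose F hF using key
  have hinj : Function.Injective F := by
    intro g1 g2 h12
    rcases hF g1 with ⟨he1, hi1⟩ | ⟨pm1, hi1, hw1⟩ <;>
      rcases hF g2 with ⟨he2, hi2⟩ | ⟨pm2, hi2, hw2⟩
    · exact Subtype.ext (he1.trans he2.symm)
    · rw [h12, hi2] at hi1; exact absurd hi1 (by simp)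
    · rw [← h12, hi1] at hi2; exact absurd hi2 (by simp)
    · rw [h12, hi2] at hi1
      have hpm : pm2 = pm1 := Sum.inl.inj hi1
      subst hpm
      apply Subtype.ext
      apply FreeGroup.toWord_injective
      rw [hw1, hw2]
  calc Nat.card {g : FreeGroup (Fin k) // IsCyclicallyReduced g ∧ wlen L g ≤ R}
      ≤ Nat.card T := Nat.card_le_card_of_injective F hinj
    _ = Nat.card {c : ConjClasses (FreeGroup (Fin k)) // c ≠ 1 ∧ hlen L c ≤ R} *
        (⌊R / ε⌋₊ + 1) + 1 := by
        rw [hT, Nat.card_sum, Nat.card_prod]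
        simp [Nat.card_eq_fintype_card]

end Fiber

section Analysis

open Filter Topology

lemma tendsto_log_lin (a b : ℝ) (ha : 0 < a) :
    Tendsto (fun R : ℝ => Real.log (a * R + b) / R) atTop (𝓝 0) := by
  have h1 : Tendsto (fun y : ℝ => Real.log y / y) atTop (𝓝 0) := by
    have := Real.isLittleO_log_id_atTop.tendsto_div_nhds_zero
    simpa using this
  have hφ : Tendsto (fun R : ℝ => a * R + b) atTop atTop :=
    tendsto_atTop_add_const_right _ b (Tendsto.const_mul_atTop ha tendsto_id)
  have h2 : Tendsto (fun R : ℝ => Real.log (a * R + b) / (a * R + b)) atTop (𝓝 0) :=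
    h1.comp hφ
  have h3 : Tendsto (fun R : ℝ => (a * R + b) / R) atTop (𝓝 a) := by
    have he : (fun R : ℝ => a + b / R) =ᶠ[atTop] fun R => (a * R + b) / R := by
      filter_upwards [eventually_ne_atTop 0] with R hR
      field_simp
    have : Tendsto (fun R : ℝ => a + b / R) atTop (𝓝 a) := by
      have := Tendsto.div_atTop (tendsto_const_nhds (x := b)) (tendsto_id (α := ℝ))
      simpa using tendsto_const_nhds.add this
    exact this.congr' he
  have h4 := h2.mul h3
  rw [zero_mul] at h4
  refine h4.congr' ?_
  filter_upwards [eventually_gt_atTop 0, eventually_gt_atTop ((1 - b) / a)] with R hR hR2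
  have hy : a * R + b ≠ 0 := by
    have : 1 - b < a * R := by rwa [div_lt_iff₀ ha, mul_comm] at hR2
    intro hc
    nlinarith
  field_simp

end Analysis

open Filter Topology

/-- Proposition 2.2: for a metric structure `L` (positive edge lengths) with volume
entropy `h`, the exponential growth rates of cyclically reduced elements and of
nontrivial conjugacy classes both exist and equal `h`. -/
theorem mcshane_stmt6 (k : ℕ) (hk : 2 ≤ k) (L : Fin k → ℝ) (hL : ∀ i, 0 < L i)
    (h : ℝ)
    (hent : Tendsto (fun R : ℝ =>
        Real.log (Nat.card {g : FreeGroup (Fin k) // wlen L g ≤ R}) / R) atTop (𝓝 h)) :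
    Tendsto (fun R : ℝ =>
        Real.log (Nat.card {g : FreeGroup (Fin k) // IsCyclicallyReduced g ∧ wlen L g ≤ R}) / R)
      atTop (𝓝 h) ∧
    Tendsto (fun R : ℝ =>
        Real.log (Nat.card {c : ConjClasses (FreeGroup (Fin k)) // c ≠ 1 ∧ hlen L c ≤ R}) / R)
      atTop (𝓝 h) := by
  classical
  obtain ⟨ε, hε, hεL⟩ := exists_eps L hL
  obtain ⟨CL, hCL, hAB⟩ := card_all_le_cyc L hk hL
  set A : ℝ → ℕ := fun R => Nat.card {g : FreeGroup (Fin k) // wlen L g ≤ R} with hA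
  set B : ℝ → ℕ := fun R =>
    Nat.card {g : FreeGroup (Fin k) // IsCyclicallyReduced g ∧ wlen L g ≤ R} with hB
  set C : ℝ → ℕ := fun R =>
    Nat.card {c : ConjClasses (FreeGroup (Fin k)) // c ≠ 1 ∧ hlen L c ≤ R} with hC
  set i0 : Fin k := ⟨0, by omega⟩ with hi0
  -- basic facts
  have hA1 : ∀ R : ℝ, 0 ≤ R → 1 ≤ A R := by
    intro R hR
    haveI := finite_wlen_le L hL R
    haveI : Nonempty {g : FreeGroup (Fin k) // wlen L g ≤ R} :=
      ⟨⟨1, by simpa [wlen] using hR⟩⟩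
    exact Nat.card_pos
  have hB1 : ∀ R : ℝ, 0 ≤ R → 1 ≤ B R := by
    intro R hR
    haveI := finite_wlen_le L hL R
    haveI : Finite {g : FreeGroup (Fin k) // IsCyclicallyReduced g ∧ wlen L g ≤ R} :=
      Finite.of_injective
        (fun gp => (⟨gp.1, gp.2.2⟩ : {g : FreeGroup (Fin k) // wlen L g ≤ R}))
        (fun a b hab => Subtype.ext (by simpa using congrArg Subtype.val hab))
    haveI : Nonempty {g : FreeGroup (Fin k) // IsCyclicallyReduced g ∧ wlen L g ≤ R} :=
      ⟨⟨1, isCyc_one, by simpa [wlen] using hR⟩⟩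
    exact Nat.card_pos
  have hBA : ∀ R : ℝ, B R ≤ A R := by
    intro R
    haveI := finite_wlen_le L hL R
    exact Nat.card_le_card_of_injective
      (fun gp => (⟨gp.1, gp.2.2⟩ : {g : FreeGroup (Fin k) // wlen L g ≤ R}))
      (fun a b hab => Subtype.ext (by simpa using congrArg Subtype.val hab))
  have hCA : ∀ R : ℝ, C R ≤ A (R + 1) := fun R => card_conj_le_all L hL R
  have hBC : ∀ R : ℝ, B R ≤ C R * (⌊R / ε⌋₊ + 1) + 1 :=
    fun R => card_cyc_le_conj L hL hε hεL R
  have hC1 : ∀ R : ℝ, L i0 ≤ R → 1 ≤ C R := by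
    intro R hR
    haveI := finite_conj L hL R
    haveI : Nonempty {c : ConjClasses (FreeGroup (Fin k)) // c ≠ 1 ∧ hlen L c ≤ R} :=
      ⟨⟨ConjClasses.mk (FreeGroup.of i0), mk_ne_one (FreeGroup.of_ne_one i0),
        le_trans (hlen_le_wlen L hL _) (by simpa [wlen, FreeGroup.toWord_of] using hR)⟩⟩
    exact Nat.card_pos
  -- the limit for cyclically reduced elements
  have hBlim : Tendsto (fun R => Real.log (B R) / R) atTop (𝓝 h) := by
    have hcomp : Tendsto (fun R : ℝ => Real.log (A (R - CL)) / (R - CL)) atTop (𝓝 h) := by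
      have := hent.comp (tendsto_atTop_add_const_right atTop (-CL) tendsto_id)
      exact this.congr fun R => by
        simp only [Function.comp_apply, id_eq, sub_eq_add_neg]
        rfl
    have hfrac : Tendsto (fun R : ℝ => (R - CL) / R) atTop (𝓝 1) := by
      have he : (fun R : ℝ => 1 - CL / R) =ᶠ[atTop] fun R => (R - CL) / R := by
        filter_upwards [eventually_ne_atTop 0] with R hR
        field_simp
      have h0 : Tendsto (fun R : ℝ => CL / R) atTop (𝓝 0) :=
        Tendsto.div_atTop tendsto_const_nhds tendsto_id
      simpa using ((tendsto_const_nhds (x := (1 : ℝ))).sub h0).congr' he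
    have hlow : Tendsto (fun R : ℝ =>
        (Real.log (A (R - CL)) / (R - CL)) * ((R - CL) / R)) atTop (𝓝 h) := by
      simpa using hcomp.mul hfrac
    refine tendsto_of_tendsto_of_tendsto_of_le_of_le' hlow hent ?_ ?_
    · filter_upwards [eventually_ge_atTop (CL + 1)] with R hR
      have hRpos : (0 : ℝ) < R := by linarith
      have hy : (0 : ℝ) < R - CL := by linarith
      have heq : (Real.log (A (R - CL)) / (R - CL)) * ((R - CL) / R) =
          Real.log (A (R - CL)) / R := by
        field_simp
      rw [heq]
      have hle : A (R - CL) ≤ B R := by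
        have := hAB (R - CL)
        rwa [show R - CL + CL = R by ring] at this
      have hlog : Real.log (A (R - CL)) ≤ Real.log (B R) :=
        Real.log_le_log (by exact_mod_cast hA1 _ (by linarith)) (by exact_mod_cast hle)
      exact (div_le_div_iff_of_pos_right hRpos).mpr hlog
    · filter_upwards [eventually_gt_atTop 0] with R hRpos
      have hlog : Real.log (B R) ≤ Real.log (A R) :=
        Real.log_le_log (by exact_mod_cast hB1 R hRpos.le) (by exact_mod_cast hBA R)
      exact (div_le_div_iff_of_pos_right hRpos).mpr hlog
  refine ⟨hBlim, ?_⟩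
  -- the limit for conjugacy classes
  have hCup : Tendsto (fun R : ℝ =>
      (Real.log (A (R + 1)) / (R + 1)) * ((R + 1) / R)) atTop (𝓝 h) := by
    have hcomp : Tendsto (fun R : ℝ => Real.log (A (R + 1)) / (R + 1)) atTop (𝓝 h) := by
      have := hent.comp (tendsto_atTop_add_const_right atTop (1 : ℝ) tendsto_id)
      simpa [Function.comp_def] using this
    have hfrac : Tendsto (fun R : ℝ => (R + 1) / R) atTop (𝓝 1) := by
      have he : (fun R : ℝ => 1 + 1 / R) =ᶠ[atTop] fun R => (R + 1) / R := by
        filter_upwards [eventually_ne_atTop 0] with R hR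
        field_simp
      have h0 : Tendsto (fun R : ℝ => 1 / R) atTop (𝓝 0) :=
        Tendsto.div_atTop tendsto_const_nhds tendsto_id
      simpa using ((tendsto_const_nhds (x := (1 : ℝ))).add h0).congr' he
    simpa using hcomp.mul hfrac
  have hClow : Tendsto (fun R : ℝ =>
      Real.log (B R) / R - (Real.log 2 + Real.log (1 / ε * R + 2)) / R) atTop (𝓝 h) := by
    have h0 : Tendsto (fun R : ℝ =>
        (Real.log 2 + Real.log (1 / ε * R + 2)) / R) atTop (𝓝 0) := by
      have ha := tendsto_log_lin (1 / ε) 2 (by positivity)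
      have hb : Tendsto (fun R : ℝ => Real.log 2 / R) atTop (𝓝 0) :=
        Tendsto.div_atTop tendsto_const_nhds tendsto_id
      have := hb.add ha
      simpa [add_div] using this
    simpa using hBlim.sub h0
  refine tendsto_of_tendsto_of_tendsto_of_le_of_le' hClow hCup ?_ ?_
  · filter_upwards [eventually_ge_atTop (max 1 (L i0))] with R hR
    have hR1 : (1 : ℝ) ≤ R := le_trans (le_max_left _ _) hR
    have hRL : L i0 ≤ R := le_trans (le_max_right _ _) hR
    have hRpos : (0 : ℝ) < R := by linarith
    have hCpos : 1 ≤ C R := hC1 R hRL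
    have hCge : (1 : ℝ) ≤ (C R : ℝ) := by exact_mod_cast hCpos
    have hfloor : ((⌊R / ε⌋₊ : ℝ) + 1) ≤ 1 / ε * R + 2 := by
      have h1 := Nat.floor_le (show (0 : ℝ) ≤ R / ε by positivity)
      have h2 : R / ε = 1 / ε * R := by ring
      linarith
    have hkey : (B R : ℝ) ≤ 2 * (C R : ℝ) * (1 / ε * R + 2) := by
      have h1 : (B R : ℝ) ≤ (C R : ℝ) * ((⌊R / ε⌋₊ : ℝ) + 1) + 1 := by
        have := hBC R
        push_cast
        exact_mod_cast this
      have hfl1 : (1 : ℝ) ≤ (⌊R / ε⌋₊ : ℝ) + 1 := by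
        have := Nat.cast_nonneg (α := ℝ) ⌊R / ε⌋₊
        linarith
      nlinarith
    have hBpos : (0 : ℝ) < (B R : ℝ) := by
      have := hB1 R (by linarith)
      exact_mod_cast Nat.lt_of_lt_of_le Nat.zero_lt_one this
    have hCne : (C R : ℝ) ≠ 0 := by linarith
    have hlin_pos : (0 : ℝ) < 1 / ε * R + 2 := by positivity
    have hlogB : Real.log (B R) ≤ Real.log 2 + Real.log (C R) + Real.log (1 / ε * R + 2) := by
      calc Real.log (B R) ≤ Real.log (2 * (C R : ℝ) * (1 / ε * R + 2)) :=
            Real.log_le_log hBpos hkey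
        _ = Real.log 2 + Real.log (C R) + Real.log (1 / ε * R + 2) := by
            rw [Real.log_mul (by positivity) hlin_pos.ne', Real.log_mul two_ne_zero hCne]
    rw [sub_le_iff_le_add, ← add_div]
    exact (div_le_div_iff_of_pos_right hRpos).mpr (by linarith)
  · filter_upwards [eventually_ge_atTop (max 1 (L i0))] with R hR
    have hR1 : (1 : ℝ) ≤ R := le_trans (le_max_left _ _) hR
    have hRL : L i0 ≤ R := le_trans (le_max_right _ _) hR
    have hRpos : (0 : ℝ) < R := by linarith
    have heq : (Real.log (A (R + 1)) / (R + 1)) * ((R + 1) / R) =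
        Real.log (A (R + 1)) / R := by
      have : R + 1 ≠ 0 := by linarith
      field_simp
    rw [heq]
    have hlog : Real.log (C R) ≤ Real.log (A (R + 1)) :=
      Real.log_le_log (by exact_mod_cast hC1 R hRL) (by exact_mod_cast hCA R)
    exact (div_le_div_iff_of_pos_right hRpos).mpr hlog
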